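/- Let t ≥ 1 be an integer, let L ≥ 0 and d_max ≥ 0 be real numbers, and let c_1, …, c_t be real numbers with |c_i| ≤ 2·L·d_max/√i for each 1 ≤ i ≤ t. Then ∑_{i=1}^t α_t^i · |c_i| ≤ 4·L·d_max/√t. -/

import Mathlib

/-- The learning rate `α_t = (H+1)/(H+t)`. -/
noncomputable def lrate (H t : ℕ) : ℝ := (H + 1) / (H + t)

/-- The weight `α_t^i = α_i · ∏_{j=i+1}^t (1 − α_j)`. -/
noncomputable def lrateW (H t i : ℕ) : ℝ :=
  lrate H i * ∏ j ∈ Finset.Icc (i + 1) t, (1 - lrate H j)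

lemma lrate_nonneg (H i : ℕ) : 0 ≤ lrate H i := by
  unfold lrate; positivity

lemma lrate_le_one (H i : ℕ) (hi : 1 ≤ i) : lrate H i ≤ 1 := by
  unfold lrate
  rw [div_le_one (by positivity)]
  have : (1:ℝ) ≤ i := by exact_mod_cast hi
  linarith

lemma lrateW_nonneg (H t i : ℕ) (hi : 1 ≤ i) : 0 ≤ lrateW H t i := by
  unfold lrateW
  apply mul_nonneg (lrate_nonneg H i)
  apply Finset.prod_nonneg
  intro j hj
  have hj1 : 1 ≤ j := le_trans (le_trans hi (Nat.le_succ i)) (Finset.mem_Icc.mp hj).1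
  linarith [lrate_le_one H j hj1]

lemma lrateW_self (H t : ℕ) : lrateW H t t = lrate H t := by
  unfold lrateW
  rw [Finset.Icc_eq_empty (by omega), Finset.prod_empty, mul_one]

lemma lrateW_succ (H t i : ℕ) (h : i ≤ t) :
    lrateW H (t+1) i = lrateW H t i * (1 - lrate H (t+1)) := by
  unfold lrateW
  rw [Finset.prod_Icc_succ_top (by omega), mul_assoc]

lemma key (H t : ℕ) (ht : 1 ≤ t) :
    ∑ i ∈ Finset.Icc 1 t, lrateW H t i * (Real.sqrt i)⁻¹ ≤ 2 / Real.sqrt t := by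
  induction t, ht using Nat.le_induction with
  | base =>
    simp [lrateW_self, lrate, Real.sqrt_one]
    rw [div_self (by positivity)]
    norm_num
  | succ t ht ih =>
    rw [Finset.sum_Icc_succ_top (by omega), lrateW_self]
    have hsum : ∑ i ∈ Finset.Icc 1 t, lrateW H (t+1) i * (Real.sqrt i)⁻¹
        = (1 - lrate H (t+1)) * ∑ i ∈ Finset.Icc 1 t, lrateW H t i * (Real.sqrt i)⁻¹ := by
      rw [Finset.mul_sum]
      apply Finset.sum_congr rfl
      intro i hi
      rw [lrateW_succ H t i (Finset.mem_Icc.mp hi).2]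
      ring
    rw [hsum]
    set α := lrate H (t+1) with hα
    have hα1 : α ≤ 1 := lrate_le_one H (t+1) (by omega)
    have hα0 : 0 ≤ α := lrate_nonneg H (t+1)
    have hst : (0:ℝ) < Real.sqrt t :=
      Real.sqrt_pos.mpr (by exact_mod_cast Nat.pos_of_ne_zero (by omega))
    have hst1 : (0:ℝ) < Real.sqrt ((t:ℝ)+1) := Real.sqrt_pos.mpr (by positivity)
    have h1 : (1 - α) * ∑ i ∈ Finset.Icc 1 t, lrateW H t i * (Real.sqrt i)⁻¹
        ≤ (1 - α) * (2 / Real.sqrt t) :=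
      mul_le_mul_of_nonneg_left ih (by linarith)
    have hD : (0:ℝ) < (H:ℝ) + t + 1 := by positivity
    have hαval : α = ((H:ℝ) + 1) / ((H:ℝ) + t + 1) := by
      rw [hα]; unfold lrate; push_cast; ring_nf
    have h1α : 1 - α = (t:ℝ) / ((H:ℝ) + t + 1) := by
      rw [hαval]; field_simp; ring
    have hs2 : Real.sqrt t ^ 2 = (t:ℝ) := Real.sq_sqrt (by positivity)
    have hu2 : Real.sqrt ((t:ℝ)+1) ^ 2 = (t:ℝ)+1 := Real.sq_sqrt (by positivity)
    have hprod : 2 * (Real.sqrt t * Real.sqrt ((t:ℝ)+1)) ≤ 2*(t:ℝ)+1 := by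
      have h := Real.sqrt_le_sqrt (show (t:ℝ)*((t:ℝ)+1) ≤ ((2*(t:ℝ)+1)/2)^2 by nlinarith)
      rw [Real.sqrt_mul (by positivity), Real.sqrt_sq (by positivity)] at h
      linarith
    have hH0 : (0:ℝ) ≤ (H:ℝ) := Nat.cast_nonneg H
    have e1 : (t:ℝ) * (2 / Real.sqrt t) = 2 * Real.sqrt t := by
      field_simp; linarith [hs2]
    have e2 : Real.sqrt ((t:ℝ)+1) * (Real.sqrt ((t:ℝ)+1))⁻¹ = 1 := mul_inv_cancel₀ hst1.ne'
    have goal' : 2 * Real.sqrt t * Real.sqrt ((t:ℝ)+1) + ((H:ℝ)+1) ≤ 2 * ((H:ℝ)+t+1) := by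
      linarith
    have eA : (t:ℝ)/((H:ℝ)+t+1)*(2/Real.sqrt t) = 2*Real.sqrt t/((H:ℝ)+t+1) := by
      field_simp
      linear_combination (-1:ℝ) * hs2
    have eB : ((H:ℝ)+1)/((H:ℝ)+t+1)*(Real.sqrt ((t:ℝ)+1))⁻¹
        = ((H:ℝ)+1)/(((H:ℝ)+t+1)*Real.sqrt ((t:ℝ)+1)) := by
      field_simp
    have key2 : (1 - α) * (2 / Real.sqrt t) + α * (Real.sqrt ((t:ℝ)+1))⁻¹
        ≤ 2 / Real.sqrt ((t:ℝ)+1) := by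
      rw [h1α, hαval, eA, eB, div_add_div _ _ hD.ne' (by positivity),
        div_le_div_iff₀ (by positivity) hst1]
      nlinarith [hu2, goal', hD, hst1,
        mul_le_mul_of_nonneg_left goal' (mul_pos hD hst1).le]
    push_cast
    linarith [h1, key2]

theorem stmt_9 (H : ℕ) (hH : 1 ≤ H) (t : ℕ) (ht : 1 ≤ t)
    (L dmax : ℝ) (hL : 0 ≤ L) (hdmax : 0 ≤ dmax) (c : ℕ → ℝ)
    (hc : ∀ i : ℕ, 1 ≤ i → i ≤ t → |c i| ≤ 2 * L * dmax / Real.sqrt i) :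
    ∑ i ∈ Finset.Icc 1 t, lrateW H t i * |c i| ≤ 4 * L * dmax / Real.sqrt t := by
  have hkey := key H t ht
  calc ∑ i ∈ Finset.Icc 1 t, lrateW H t i * |c i|
      ≤ ∑ i ∈ Finset.Icc 1 t, lrateW H t i * (2 * L * dmax * (Real.sqrt i)⁻¹) := by
        apply Finset.sum_le_sum
        intro i hi
        obtain ⟨h1, h2⟩ := Finset.mem_Icc.mp hi
        have := hc i h1 h2
        rw [div_eq_mul_inv] at this
        exact mul_le_mul_of_nonneg_left this (lrateW_nonneg H t i h1)
    _ = (2 * L * dmax) * ∑ i ∈ Finset.Icc 1 t, lrateW H t i * (Real.sqrt i)⁻¹ := by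
        rw [Finset.mul_sum]
        exact Finset.sum_congr rfl (fun i _ => by ring)
    _ ≤ (2 * L * dmax) * (2 / Real.sqrt t) := by
        apply mul_le_mul_of_nonneg_left hkey (by positivity)
    _ = 4 * L * dmax / Real.sqrt t := by ring
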